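/- If z : ℝ → ℂ is differentiable and never zero, and r'(t) = z(t)², then the signed curvature of the plane curve r, given by κ = (x'·y'' − y'·x'')/((x')² + (y')²)^{3/2}, equals 2·Im(conj(z(t))·z'(t))/|z(t)|⁴. -/

import Mathlib

/-- If r'(t) = z(t)² with z differentiable and nonvanishing, the signed
curvature (x'y'' − y'x'')/((x')²+(y')²)^{3/2} equals 2 Im(conj z · z')/|z|⁴. -/
theorem ph_curvature (z z' r : ℝ → ℂ) (x'' y'' : ℝ → ℝ)
    (hz : ∀ t, HasDerivAt z (z' t) t)
    (hz0 : ∀ t, z t ≠ 0)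
    (hr : ∀ t, HasDerivAt r ((z t) ^ 2) t)
    (hx'' : ∀ t, HasDerivAt (fun s => ((z s) ^ 2).re) (x'' t) t)
    (hy'' : ∀ t, HasDerivAt (fun s => ((z s) ^ 2).im) (y'' t) t) :
    ∀ t, (((z t) ^ 2).re * y'' t - ((z t) ^ 2).im * x'' t) /
        ((((z t) ^ 2).re ^ 2 + ((z t) ^ 2).im ^ 2) ^ ((3 : ℝ) / 2)) =
      2 * ((starRingEnd ℂ) (z t) * z' t).im / ‖z t‖ ^ 4 := by
  intro t
  have hw' : HasDerivAt (fun s => (z s) ^ 2) (2 * z t * z' t) t := by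
    have h := (hz t).mul (hz t)
    have : z' t * z t + z t * z' t = 2 * z t * z' t := by ring
    rw [this] at h
    have e : (fun s => (z s) ^ 2) = z * z := by
      funext s
      simp [pow_two]
    rw [e]
    exact h
  have hre : HasDerivAt (fun s => ((z s) ^ 2).re) ((2 * z t * z' t).re) t := by
    simpa [Function.comp_def] using (Complex.reCLM.hasFDerivAt.comp t hw'.hasFDerivAt).hasDerivAt
  have him : HasDerivAt (fun s => ((z s) ^ 2).im) ((2 * z t * z' t).im) t := by
    simpa [Function.comp_def] using (Complex.imCLM.hasFDerivAt.comp t hw'.hasFDerivAt).hasDerivAt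
  have hx : x'' t = (2 * z t * z' t).re := (hx'' t).unique hre
  have hy : y'' t = (2 * z t * z' t).im := (hy'' t).unique him
  set a := (z t).re with ha
  set b := (z t).im with hb
  set c := (z' t).re with hc
  set d := (z' t).im with hd
  have hX : a ^ 2 + b ^ 2 ≠ 0 := by
    have := (Complex.normSq_pos.mpr (hz0 t))
    rw [Complex.normSq_apply] at this
    nlinarith
  have hXpos : (0 : ℝ) < a ^ 2 + b ^ 2 := by
    have := (Complex.normSq_pos.mpr (hz0 t))
    rw [Complex.normSq_apply] at this
    nlinarith
  have habs : ‖z t‖ ^ 4 = (a ^ 2 + b ^ 2) ^ 2 := by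
    have h2 : ‖z t‖ ^ 2 = a ^ 2 + b ^ 2 := by
      rw [Complex.sq_norm, Complex.normSq_apply]; ring
    calc ‖z t‖ ^ 4 = (‖z t‖ ^ 2) ^ 2 := by ring
      _ = (a ^ 2 + b ^ 2) ^ 2 := by rw [h2]
  have hden : ((z t ^ 2).re ^ 2 + (z t ^ 2).im ^ 2) = ((a ^ 2 + b ^ 2) ^ 2) := by
    simp [pow_two, Complex.mul_re, Complex.mul_im]
    ring
  have hrpow : (((a ^ 2 + b ^ 2) ^ 2 : ℝ)) ^ ((3 : ℝ) / 2) = (a ^ 2 + b ^ 2) ^ 3 := by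
    rw [← Real.rpow_natCast (a ^ 2 + b ^ 2) 2, ← Real.rpow_mul hXpos.le,
      show ((2 : ℕ) : ℝ) * ((3 : ℝ) / 2) = ((3 : ℕ) : ℝ) by norm_num,
      Real.rpow_natCast]
  have h3 : (a ^ 2 + b ^ 2) ^ 3 ≠ 0 := pow_ne_zero _ hX
  have h2 : (a ^ 2 + b ^ 2) ^ 2 ≠ 0 := pow_ne_zero _ hX
  rw [hx, hy, hden, hrpow, habs, div_eq_div_iff h3 h2]
  simp only [pow_two, Complex.mul_re, Complex.mul_im, Complex.conj_re, Complex.conj_im,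
    Complex.re_ofNat, Complex.im_ofNat, ha, hb, hc, hd]
  ring
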